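/- Let m and n be positive integers and let a, b be real numbers with a > 0 and b+1−m−n−a > 0. Then Σ_{k=0}^{∞} (m)_k (n)_k (a)_k / ((b)_k · (k!)²) = [Γ(n)·Γ(b) / (Γ(m)·Γ(a)·Γ(b−m)·Γ(b−a))] · Σ_{k=0}^{n−1} Γ(m+k)·Γ(a+k)·Γ(b−k−m−a) / ((k!)² · Γ(n−k)). -/

import Mathlib

open scoped BigOperators
open Finset

open Filter Topology
open scoped Nat

/-- Pochhammer (ascending factorial) `(x)_k = x (x+1) ⋯ (x+k-1)`. -/
noncomputable def poch (x : ℝ) (k : ℕ) : ℝ := Polynomial.eval x (ascPochhammer ℝ k)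

lemma poch_zero (x : ℝ) : poch x 0 = 1 := by simp [poch]

lemma poch_succ (x : ℝ) (k : ℕ) : poch x (k + 1) = poch x k * (x + k) :=
  ascPochhammer_succ_eval k x

lemma poch_pos {x : ℝ} (hx : 0 < x) (k : ℕ) : 0 < poch x k :=
  ascPochhammer_pos k x hx

lemma poch_succ_left (x : ℝ) (k : ℕ) : poch x (k + 1) = x * poch (x + 1) k := by
  have := congrArg (Polynomial.eval x) (ascPochhammer_succ_left ℝ k)
  simpa [poch, Polynomial.eval_comp] using this

lemma poch_add (x : ℝ) (j t : ℕ) : poch x (j + t) = poch x j * poch (x + j) t := by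
  have := congrArg (Polynomial.eval x) (ascPochhammer_mul ℝ j t)
  simpa [poch, Polynomial.eval_comp] using this.symm

lemma poch_one (k : ℕ) : poch 1 k = (k ! : ℝ) := ascPochhammer_eval_one ℝ k

lemma poch_eq_prod (x : ℝ) (k : ℕ) : poch x k = ∏ j ∈ range k, (x + j) := by
  induction k with
  | zero => simp [poch_zero]
  | succ k ih => rw [poch_succ, ih, prod_range_succ]

lemma poch_gamma {x : ℝ} (hx : 0 < x) (k : ℕ) :
    poch x k = Real.Gamma (x + k) / Real.Gamma x := by
  have hΓ : Real.Gamma x ≠ 0 := (Real.Gamma_pos_of_pos hx).ne'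
  induction k with
  | zero => simp [poch_zero, hΓ]
  | succ k ih =>
      have hxk : x + (k : ℝ) ≠ 0 := by positivity
      rw [poch_succ, ih, show x + ((k : ℕ) + 1 : ℕ) = (x + k) + 1 by push_cast; ring,
        Real.Gamma_add_one hxk]
      field_simp

lemma poch_ratio_tendsto {x y : ℝ} (hx : 0 < x) (hy : 0 < y) :
    Tendsto (fun k : ℕ => poch x k / poch y k * (k : ℝ) ^ (y - x)) atTop
      (𝓝 (Real.Gamma y / Real.Gamma x)) := by
  have hΓx : Real.Gamma x ≠ 0 := (Real.Gamma_pos_of_pos hx).ne'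
  have h1 : Tendsto (fun n : ℕ => Real.GammaSeq y n / Real.GammaSeq x n) atTop
      (𝓝 (Real.Gamma y / Real.Gamma x)) :=
    (Real.GammaSeq_tendsto_Gamma y).div (Real.GammaSeq_tendsto_Gamma x) hΓx
  have h2 : (fun n : ℕ => Real.GammaSeq y n / Real.GammaSeq x n) =ᶠ[atTop]
      fun n : ℕ => poch x (n + 1) / poch y (n + 1) * (n : ℝ) ^ (y - x) := by
    filter_upwards [eventually_gt_atTop 0] with n hn
    have hn' : (0 : ℝ) < n := by exact_mod_cast hn
    have e1 : ∏ j ∈ range (n + 1), (x + (j : ℝ)) = poch x (n + 1) := (poch_eq_prod x (n + 1)).symm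
    have e2 : ∏ j ∈ range (n + 1), (y + (j : ℝ)) = poch y (n + 1) := (poch_eq_prod y (n + 1)).symm
    rw [Real.GammaSeq, Real.GammaSeq, e1, e2, Real.rpow_sub hn']
    have p1 := (poch_pos hx (n + 1)).ne'
    have p2 := (poch_pos hy (n + 1)).ne'
    have p3 : (n ! : ℝ) ≠ 0 := Nat.cast_ne_zero.mpr n.factorial_ne_zero
    have p4 : (n : ℝ) ^ x ≠ 0 := (Real.rpow_pos_of_pos hn' x).ne'
    have p5 : (n : ℝ) ^ y ≠ 0 := (Real.rpow_pos_of_pos hn' y).ne'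
    field_simp
  have h3 : Tendsto (fun n : ℕ => poch x (n + 1) / poch y (n + 1) * (n : ℝ) ^ (y - x)) atTop
      (𝓝 (Real.Gamma y / Real.Gamma x)) := h1.congr' h2
  have h4 : Tendsto (fun n : ℕ => (((n : ℝ) + 1) / (n : ℝ)) ^ (y - x)) atTop (𝓝 1) := by
    have hb : Tendsto (fun n : ℕ => ((n : ℝ) + 1) / (n : ℝ)) atTop (𝓝 1) := by
      have := tendsto_one_div_atTop_nhds_zero_nat (𝕜 := ℝ)
      have h := this.const_add (1 : ℝ)
      rw [add_zero] at h
      refine h.congr' ?_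
      filter_upwards [eventually_gt_atTop 0] with n hn
      have hn' : (n : ℝ) ≠ 0 := by positivity
      field_simp
    have := hb.rpow_const (p := y - x) (Or.inl one_ne_zero)
    simpa using this
  have h5 : Tendsto (fun n : ℕ => poch x (n + 1) / poch y (n + 1) * ((n : ℝ) + 1) ^ (y - x))
      atTop (𝓝 (Real.Gamma y / Real.Gamma x)) := by
    have hmul := h3.mul h4
    rw [mul_one] at hmul
    refine hmul.congr' ?_
    filter_upwards [eventually_gt_atTop 0] with n hn
    have hn' : (0 : ℝ) < n := by exact_mod_cast hn
    rw [Real.div_rpow (by positivity) hn'.le]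
    have hnp : (n : ℝ) ^ (y - x) ≠ 0 := (Real.rpow_pos_of_pos hn' (y - x)).ne'
    calc poch x (n + 1) / poch y (n + 1) * (n : ℝ) ^ (y - x)
          * (((n : ℝ) + 1) ^ (y - x) / (n : ℝ) ^ (y - x))
        = poch x (n + 1) / poch y (n + 1) * ((n : ℝ) + 1) ^ (y - x)
          * ((n : ℝ) ^ (y - x) / (n : ℝ) ^ (y - x)) := by ring
      _ = poch x (n + 1) / poch y (n + 1) * ((n : ℝ) + 1) ^ (y - x) := by
          rw [div_self hnp, mul_one]
  refine (tendsto_add_atTop_iff_nat 1).mp ?_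
  refine h5.congr ?_
  intro n
  push_cast
  ring

noncomputable def uu (x y z : ℝ) (k : ℕ) : ℝ := poch x k * poch y k / (poch z k * (k ! : ℝ))

lemma tendsto_mul_rpow_zero {f : ℕ → ℝ} {p L : ℝ}
    (h : Tendsto (fun k => f k * (k : ℝ) ^ p) atTop (𝓝 L)) {q : ℝ} (hq : q < p) :
    Tendsto (fun k => f k * (k : ℝ) ^ q) atTop (𝓝 0) := by
  have h0 : Tendsto (fun k : ℕ => (k : ℝ) ^ (q - p)) atTop (𝓝 0) := by
    have := (tendsto_rpow_neg_atTop (by linarith : 0 < p - q)).comp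
      (tendsto_natCast_atTop_atTop (R := ℝ))
    refine this.congr fun k => ?_
    simp [Function.comp, neg_sub]
  have hmul := h.mul h0
  rw [mul_zero] at hmul
  refine hmul.congr' ?_
  filter_upwards [eventually_gt_atTop 0] with k hk
  have hk' : (0 : ℝ) < k := by exact_mod_cast hk
  rw [mul_assoc, ← Real.rpow_add hk']
  ring_nf

lemma summable_of_tendsto_mul_rpow {f : ℕ → ℝ} {p L : ℝ} (hp : 1 < p)
    (h : Tendsto (fun k => f k * (k : ℝ) ^ p) atTop (𝓝 L)) : Summable f := by
  have hb : ∀ᶠ k : ℕ in atTop, |f k * (k : ℝ) ^ p| ≤ |L| + 1 :=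
    h.abs.eventually_le_const (by linarith [abs_nonneg L])
  refine Summable.of_norm_bounded_eventually_nat (g := fun k => (|L| + 1) * (k : ℝ) ^ (-p))
    ((Real.summable_nat_rpow.mpr (by linarith)).mul_left _) ?_
  filter_upwards [hb, eventually_gt_atTop 0] with k hk hk1
  have hk' : (0 : ℝ) < k := by exact_mod_cast hk1
  have hkp : (0 : ℝ) < (k : ℝ) ^ p := Real.rpow_pos_of_pos hk' p
  rw [Real.norm_eq_abs, Real.rpow_neg hk'.le]
  rw [abs_mul, abs_of_nonneg hkp.le] at hk
  calc |f k| = |f k| * (k : ℝ) ^ p * ((k : ℝ) ^ p)⁻¹ := by field_simp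
    _ ≤ (|L| + 1) * ((k : ℝ) ^ p)⁻¹ := by gcongr

/-- the generic `₂F₁`-type term -/

lemma uu_asymp {x y z : ℝ} (hx : 0 < x) (hy : 0 < y) (hz : 0 < z) :
    Tendsto (fun k : ℕ => uu x y z k * (k : ℝ) ^ (1 + z - x - y)) atTop
      (𝓝 (Real.Gamma z / (Real.Gamma x * Real.Gamma y))) := by
  have h1 := poch_ratio_tendsto hx one_pos
  have h2 := poch_ratio_tendsto hy hz
  have hmul := h1.mul h2
  rw [Real.Gamma_one] at hmul
  have hval : 1 / Real.Gamma x * (Real.Gamma z / Real.Gamma y)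
      = Real.Gamma z / (Real.Gamma x * Real.Gamma y) := by ring
  rw [hval] at hmul
  refine hmul.congr' ?_
  filter_upwards [eventually_gt_atTop 0] with k hk
  have hk' : (0 : ℝ) < k := by exact_mod_cast hk
  have e : (k : ℝ) ^ (1 - x) * (k : ℝ) ^ (z - y) = (k : ℝ) ^ (1 + z - x - y) := by
    rw [← Real.rpow_add hk']; ring_nf
  rw [uu, ← e, poch_one]
  have p1 := (poch_pos hz k).ne'
  have p2 : (k ! : ℝ) ≠ 0 := Nat.cast_ne_zero.mpr k.factorial_ne_zero
  field_simp

lemma summable_uu {x y z : ℝ} (hx : 0 < x) (hy : 0 < y) (hz : 0 < z) (h : x + y < z) :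
    Summable (fun k => uu x y z k) :=
  summable_of_tendsto_mul_rpow (by linarith) (uu_asymp hx hy hz)

lemma summable_k_uu {x y z : ℝ} (hx : 0 < x) (hy : 0 < y) (hz : 0 < z) (h : x + y + 1 < z) :
    Summable (fun k : ℕ => (k : ℝ) * uu x y z k) := by
  refine summable_of_tendsto_mul_rpow (p := z - x - y)
    (L := Real.Gamma z / (Real.Gamma x * Real.Gamma y)) (by linarith) ?_
  refine (uu_asymp hx hy hz).congr' ?_
  filter_upwards [eventually_gt_atTop 0] with k hk
  have hk' : (0 : ℝ) < k := by exact_mod_cast hk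
  have e : (k : ℝ) ^ (1 + z - x - y) = (k : ℝ) * (k : ℝ) ^ (z - x - y) := by
    rw [show (1 : ℝ) + z - x - y = 1 + (z - x - y) by ring, Real.rpow_add hk', Real.rpow_one]
  rw [e]; ring

lemma hasSum_of_tendsto_sum {f : ℕ → ℝ} {L : ℝ} (hf : Summable f)
    (h : Tendsto (fun n => ∑ i ∈ range n, f i) atTop (𝓝 L)) : HasSum f L := by
  obtain ⟨S, hS⟩ := hf
  rwa [tendsto_nhds_unique h hS.tendsto_sum_nat]

lemma hasSum_telescope {v : ℕ → ℝ} (hsum : Summable fun k => v k - v (k + 1))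
    (h0 : Tendsto v atTop (𝓝 0)) : HasSum (fun k => v k - v (k + 1)) (v 0) := by
  refine hasSum_of_tendsto_sum hsum ?_
  have e : ∀ n, ∑ i ∈ range n, (v i - v (i + 1)) = v 0 - v n := fun n =>
    Finset.sum_range_sub' v n
  simp_rw [e]
  simpa using tendsto_const_nhds.sub h0

lemma poch_shift (x : ℝ) (hx : x ≠ 0) (k : ℕ) :
    poch (x + 1) k = poch x k * (x + k) / x := by
  rw [eq_div_iff hx, mul_comm, ← poch_succ_left, poch_succ]

lemma gauss_hasSum (a b : ℝ) (ha : 0 < a) :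
    ∀ m : ℕ, 0 < m → 0 < b - m - a →
      HasSum (fun k : ℕ => uu (m : ℝ) a b k)
        (Real.Gamma b * Real.Gamma (b - m - a) / (Real.Gamma (b - m) * Real.Gamma (b - a))) := by
  intro m
  induction m with
  | zero => intro h; exact absurd h (lt_irrefl 0)
  | succ m ih =>
    intro _ hconv
    have hconv' : 0 < b - 1 - m - a := by push_cast at hconv; linarith
    have hm0' : (0:ℝ) ≤ m := Nat.cast_nonneg m
    have hb : 0 < b := by linarith
    rcases Nat.eq_zero_or_pos m with rfl | hm0
    -- base case : the series ₂F₁(1, a; b; 1)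
    · have hconv1 : 0 < b - 1 - a := by simpa using hconv'
      set w : ℕ → ℝ := fun k => (b - 1 + k) * poch a k / poch b k / (b - 1 - a) with hw
      have ptw : ∀ k : ℕ, uu (1 : ℝ) a b k = w k - w (k + 1) := by
        intro k
        have p1 := (poch_pos hb k).ne'
        have p2 : (k ! : ℝ) ≠ 0 := Nat.cast_ne_zero.mpr k.factorial_ne_zero
        have p3 : b + (k : ℝ) ≠ 0 := by positivity
        have p4 : b - 1 - a ≠ 0 := hconv1.ne'
        simp only [hw, uu, poch_one, poch_succ]
        push_cast
        field_simp
        ring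
      have hsummable : Summable (fun k => uu (1 : ℝ) a b k) :=
        summable_uu one_pos ha hb (by linarith)
      have hsummable' : Summable (fun k => w k - w (k + 1)) :=
        hsummable.congr fun k => ptw k
      have t0 : Tendsto (fun k : ℕ => uu (1:ℝ) a b k * (k : ℝ) ^ (0:ℝ)) atTop (𝓝 0) :=
        tendsto_mul_rpow_zero (uu_asymp one_pos ha hb) (by linarith)
      have t1 : Tendsto (fun k : ℕ => uu (1:ℝ) a b k * (k : ℝ) ^ (1:ℝ)) atTop (𝓝 0) :=
        tendsto_mul_rpow_zero (uu_asymp one_pos ha hb) (by linarith)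
      have hw0 : Tendsto w atTop (𝓝 0) := by
        have hcomb := ((t0.const_mul (b - 1)).add t1).div_const (b - 1 - a)
        norm_num at hcomb
        refine hcomb.congr fun k => ?_
        have p1 := (poch_pos hb k).ne'
        have p2 : (k ! : ℝ) ≠ 0 := Nat.cast_ne_zero.mpr k.factorial_ne_zero
        have p4 : b - 1 - a ≠ 0 := hconv1.ne'
        simp only [hw, uu, poch_one, Real.rpow_zero, Real.rpow_one]
        field_simp
      have htel := hasSum_telescope hsummable' hw0
      have hW0 : w 0 = (b - 1) / (b - 1 - a) := by
        simp [hw, poch_zero]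
      have hΓ1 : Real.Gamma (b - 1) ≠ 0 := (Real.Gamma_pos_of_pos (by linarith)).ne'
      have hΓ2 : Real.Gamma (b - 1 - a) ≠ 0 := (Real.Gamma_pos_of_pos hconv1).ne'
      have hval : (b - 1) / (b - 1 - a)
          = Real.Gamma b * Real.Gamma (b - 1 - a)
            / (Real.Gamma (b - 1) * Real.Gamma (b - a)) := by
        have h1 : Real.Gamma b = (b - 1) * Real.Gamma (b - 1) := by
          nth_rewrite 1 [show b = (b - 1) + 1 by ring]
          rw [Real.Gamma_add_one (by linarith)]
        have h2 : Real.Gamma (b - a) = (b - 1 - a) * Real.Gamma (b - 1 - a) := by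
          nth_rewrite 1 [show b - a = (b - 1 - a) + 1 by ring]
          rw [Real.Gamma_add_one hconv1.ne']
        rw [h1, h2]
        field_simp
      have hfun : (fun k => w k - w (k + 1)) = fun k => uu (1 : ℝ) a b k :=
        funext fun k => (ptw k).symm
      rw [hfun, hW0, hval] at htel
      have e1 : ((0 + 1 : ℕ) : ℝ) = 1 := by norm_num
      rw [e1, show b - (1:ℝ) - a = b - 1 - a from rfl]
      convert htel using 3 <;> norm_num
    -- inductive step
    · have hm' : (0:ℝ) < m := by exact_mod_cast hm0
      have ihS := ih hm0 (by linarith)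
      set S := Real.Gamma b * Real.Gamma (b - m - a)
        / (Real.Gamma (b - m) * Real.Gamma (b - a)) with hS
      have hksum : Summable (fun k : ℕ => (k : ℝ) * uu (m : ℝ) a b k) :=
        summable_k_uu hm' ha hb (by linarith)
      set T := ∑' k : ℕ, (k : ℝ) * uu (m : ℝ) a b k with hTdef
      have hT : HasSum (fun k : ℕ => (k : ℝ) * uu (m : ℝ) a b k) T := hksum.hasSum
      set v : ℕ → ℝ := fun k => (k : ℝ) * (b - 1 + k) * uu (m : ℝ) a b k with hv
      have ptw : ∀ k : ℕ, v k - v (k + 1)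
          = (b - 1 - m - a) * ((k : ℝ) * uu (m : ℝ) a b k)
            - ((m : ℝ) * a) * uu (m : ℝ) a b k := by
        intro k
        have p1 := (poch_pos hb k).ne'
        have p2 : (k ! : ℝ) ≠ 0 := Nat.cast_ne_zero.mpr k.factorial_ne_zero
        have p3 : b + (k : ℝ) ≠ 0 := by positivity
        have p4 : (k : ℝ) + 1 ≠ 0 := by positivity
        simp only [hv, uu, poch_succ, Nat.factorial_succ]
        push_cast
        field_simp
        ring
      have hsum_t : Summable (fun k => v k - v (k + 1)) :=
        (((hksum.mul_left (b - 1 - m - a)).sub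
          (ihS.summable.mul_left ((m : ℝ) * a)))).congr fun k => (ptw k).symm
      have t2 : Tendsto (fun k : ℕ => uu (m:ℝ) a b k * (k : ℝ) ^ (2:ℝ)) atTop (𝓝 0) :=
        tendsto_mul_rpow_zero (uu_asymp hm' ha hb) (by linarith)
      have t1 : Tendsto (fun k : ℕ => uu (m:ℝ) a b k * (k : ℝ) ^ (1:ℝ)) atTop (𝓝 0) :=
        tendsto_mul_rpow_zero (uu_asymp hm' ha hb) (by linarith)
      have hv0 : Tendsto v atTop (𝓝 0) := by
        have hcomb := t2.add (t1.const_mul (b - 1))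
        norm_num at hcomb
        refine hcomb.congr fun k => ?_
        have e2 : (k : ℝ) ^ (2:ℝ) = (k:ℝ) * (k:ℝ) := by
          rw [show (2:ℝ) = ((2:ℕ) : ℝ) by norm_num, Real.rpow_natCast]
          ring
        simp only [hv, e2, Real.rpow_one]
        ring
      have htel := hasSum_telescope hsum_t hv0
      have hv00 : v 0 = 0 := by simp [hv]
      rw [hv00] at htel
      have h2 := (hT.mul_left (b - 1 - m - a)).sub (ihS.mul_left ((m : ℝ) * a))
      rw [show (fun k : ℕ => (b - 1 - m - a) * ((k:ℝ) * uu (m:ℝ) a b k)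
            - ((m:ℝ) * a) * uu (m:ℝ) a b k) = fun k => v k - v (k + 1)
          from funext fun k => (ptw k).symm] at h2
      have hEq : (b - 1 - m - a) * T - (m : ℝ) * a * S = 0 := h2.unique htel
      have hTval : T = (m : ℝ) * a * S / (b - 1 - m - a) := by
        field_simp
        linarith
      have ptw2 : ∀ k : ℕ, uu ((m : ℝ) + 1) a b k
          = uu (m : ℝ) a b k + (1 / (m : ℝ)) * ((k : ℝ) * uu (m : ℝ) a b k) := by
        intro k
        have p1 := (poch_pos hb k).ne'
        have p2 : (k ! : ℝ) ≠ 0 := Nat.cast_ne_zero.mpr k.factorial_ne_zero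
        simp only [uu, poch_shift (m : ℝ) hm'.ne' k]
        field_simp
      have h3 := ihS.add (hT.mul_left (1 / (m : ℝ)))
      rw [show (fun k : ℕ => uu (m:ℝ) a b k + (1/(m:ℝ)) * ((k:ℝ) * uu (m:ℝ) a b k))
            = fun k => uu ((m:ℝ) + 1) a b k from funext fun k => (ptw2 k).symm] at h3
      have hcast : ((m + 1 : ℕ) : ℝ) = (m : ℝ) + 1 := by push_cast; ring
      rw [hcast]
      have hval : S + 1 / (m : ℝ) * T
          = Real.Gamma b * Real.Gamma (b - ((m:ℝ) + 1) - a)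
            / (Real.Gamma (b - ((m:ℝ) + 1)) * Real.Gamma (b - a)) := by
        have hg1 : Real.Gamma (b - m) = (b - 1 - m) * Real.Gamma (b - 1 - m) := by
          rw [show b - (m:ℝ) = (b - 1 - m) + 1 by ring, Real.Gamma_add_one (by linarith)]
        have hg2 : Real.Gamma (b - m - a) = (b - 1 - m - a) * Real.Gamma (b - 1 - m - a) := by
          rw [show b - (m:ℝ) - a = (b - 1 - m - a) + 1 by ring,
            Real.Gamma_add_one hconv'.ne']
        have e1 : b - ((m:ℝ) + 1) - a = b - 1 - m - a := by ring
        have e2 : b - ((m:ℝ) + 1) = b - 1 - m := by ring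
        rw [e1, e2, hTval, hS, hg1, hg2]
        have n1 : Real.Gamma b ≠ 0 := (Real.Gamma_pos_of_pos hb).ne'
        have n2 : Real.Gamma (b - 1 - m) ≠ 0 := (Real.Gamma_pos_of_pos (by linarith)).ne'
        have n3 : Real.Gamma (b - 1 - m - a) ≠ 0 := (Real.Gamma_pos_of_pos hconv').ne'
        have n4 : Real.Gamma (b - a) ≠ 0 := (Real.Gamma_pos_of_pos (by linarith)).ne'
        have n5 : b - 1 - m ≠ 0 := by linarith
        have n6 : b - 1 - m - a ≠ 0 := hconv'.ne'
        field_simp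
        ring
      rw [← hval]
      exact h3

lemma nat_vandermonde (n k : ℕ) :
    (n + k).choose k = ∑ j ∈ range (n + 1), n.choose j * k.choose j := by
  rw [Nat.add_choose_eq, Finset.Nat.sum_antidiagonal_eq_sum_range_succ_mk]
  have e1 : ∀ i ∈ range (k + 1), n.choose i * k.choose (k - i) = n.choose i * k.choose i := by
    intro i hi
    rw [Nat.choose_symm (by simpa [Nat.lt_succ_iff] using hi)]
  rw [Finset.sum_congr rfl e1]
  have h2 : ∑ i ∈ range (k + 1), n.choose i * k.choose i
      = ∑ i ∈ range (n + 1 + (k + 1)), n.choose i * k.choose i := by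
    refine Finset.sum_subset (Finset.range_subset_range.mpr (by omega)) fun i _ hi => ?_
    have : k < i := by simpa [Nat.lt_succ_iff] using hi
    simp [Nat.choose_eq_zero_of_lt this]
  have h3 : ∑ i ∈ range (n + 1), n.choose i * k.choose i
      = ∑ i ∈ range (n + 1 + (k + 1)), n.choose i * k.choose i := by
    refine Finset.sum_subset (Finset.range_subset_range.mpr (by omega)) fun i _ hi => ?_
    have : n < i := by simpa [Nat.lt_succ_iff] using hi
    simp [Nat.choose_eq_zero_of_lt this]
  rw [h2, ← h3]

lemma poch_nat_cast (n k : ℕ) : poch (n : ℝ) k = (n.ascFactorial k : ℝ) := by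
  rw [poch, ← ascPochhammer_nat_eq_ascFactorial]
  exact_mod_cast (ascPochhammer_eval_cast (S := ℝ) k n).symm

lemma nat_asc_choose (n k : ℕ) (hn : 0 < n) :
    n.ascFactorial k = k ! * (n - 1 + k).choose k := by
  have h1 : (n - 1)! * n.ascFactorial k = (n - 1 + k)! := by
    have := factorial_mul_ascPochhammer ℕ (n - 1) k
    rw [ascPochhammer_nat_eq_ascFactorial] at this
    simp only [Nat.cast_id] at this
    rw [show n - 1 + 1 = n from Nat.succ_pred_eq_of_pos hn] at this
    simpa using this
  have h2 : (n - 1 + k).choose k * k ! * (n - 1)! = (n - 1 + k)! := by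
    have := Nat.choose_mul_factorial_mul_factorial (Nat.le_add_left k (n - 1))
    simpa using this
  have hfac : 0 < (n - 1)! := Nat.factorial_pos _
  apply Nat.eq_of_mul_eq_mul_left hfac
  rw [h1, ← h2]
  ring

lemma poch_nat_vandermonde (n k : ℕ) (hn : 0 < n) :
    poch (n : ℝ) k = (k ! : ℝ) * ∑ j ∈ range n, ((n - 1).choose j : ℝ) * (k.choose j : ℝ) := by
  have hV : n.ascFactorial k = k ! * ∑ j ∈ range n, (n - 1).choose j * k.choose j := by
    rw [nat_asc_choose n k hn, nat_vandermonde (n - 1) k,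
      Nat.sub_add_cancel (by omega : 1 ≤ n)]
  rw [poch_nat_cast, hV]
  push_cast
  ring

lemma shift_term (x y z : ℝ) (hz : 0 < z) (j t : ℕ) :
    (((j + t).choose j : ℕ) : ℝ) * (poch x (j + t) * poch y (j + t)
        / (poch z (j + t) * ((j + t)! : ℝ)))
      = (poch x j * poch y j / (poch z j * (j ! : ℝ)))
        * (poch (x + j) t * poch (y + j) t / (poch (z + j) t * (t ! : ℝ))) := by
  have hfac : ((j + t).choose j : ℝ) * (j ! : ℝ) * (t ! : ℝ) = ((j + t)! : ℝ) := by
    have h := Nat.choose_mul_factorial_mul_factorial (Nat.le_add_right j t)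
    rw [Nat.add_sub_cancel_left] at h
    exact_mod_cast congrArg (Nat.cast (R := ℝ)) h
  have p1 := (poch_pos hz j).ne'
  have p2 := (poch_pos (by positivity : (0:ℝ) < z + j) t).ne'
  have p3 : (j ! : ℝ) ≠ 0 := Nat.cast_ne_zero.mpr j.factorial_ne_zero
  have p4 : (t ! : ℝ) ≠ 0 := Nat.cast_ne_zero.mpr t.factorial_ne_zero
  have p5 : ((j + t)! : ℝ) ≠ 0 := Nat.cast_ne_zero.mpr (j + t).factorial_ne_zero
  rw [poch_add x j t, poch_add y j t, poch_add z j t, ← hfac]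
  have p6 : ((j + t).choose j : ℝ) ≠ 0 :=
    Nat.cast_ne_zero.mpr (Nat.choose_pos (Nat.le_add_right j t)).ne'
  field_simp

lemma choose_gamma (n j : ℕ) (hj : j < n) :
    (((n - 1).choose j : ℕ) : ℝ)
      = Real.Gamma n / ((j ! : ℝ) * Real.Gamma ((n : ℝ) - j)) := by
  have h1 : (n - 1).choose j * j ! * (n - 1 - j)! = (n - 1)! :=
    Nat.choose_mul_factorial_mul_factorial (by omega)
  have hg1 : Real.Gamma (n : ℝ) = ((n - 1)! : ℝ) := by
    rw [show (n : ℝ) = ((n - 1 : ℕ) : ℝ) + 1 by push_cast [Nat.cast_sub (by omega : 1 ≤ n)]; ring]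
    exact Real.Gamma_nat_eq_factorial (n - 1)
  have hg2 : Real.Gamma ((n : ℝ) - j) = ((n - 1 - j)! : ℝ) := by
    rw [show (n : ℝ) - j = ((n - 1 - j : ℕ) : ℝ) + 1 by
      push_cast [Nat.cast_sub (by omega : 1 ≤ n), Nat.cast_sub (by omega : j ≤ n - 1)]; ring]
    exact Real.Gamma_nat_eq_factorial (n - 1 - j)
  have p3 : (j ! : ℝ) ≠ 0 := Nat.cast_ne_zero.mpr j.factorial_ne_zero
  have p4 : ((n - 1 - j)! : ℝ) ≠ 0 := Nat.cast_ne_zero.mpr (n - 1 - j).factorial_ne_zero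
  rw [hg1, hg2, eq_div_iff (by positivity)]
  have := congrArg (Nat.cast (R := ℝ)) h1
  push_cast at this ⊢
  linarith [this]

/-- The evaluation of `₃F₂(m, n, a; b, 1; 1)` via Karlsson's transformation. -/
theorem karlsson_transformed (m n : ℕ) (hm : 0 < m) (hn : 0 < n) (a b : ℝ)
    (ha : a > 0) (hconv : b + 1 - (m : ℝ) - (n : ℝ) - a > 0) :
    ∑' k : ℕ,
        poch (m : ℝ) k * poch (n : ℝ) k * poch a k /
          (poch b k * ((k.factorial : ℝ)) ^ 2) =
      Real.Gamma (n : ℝ) * Real.Gamma b /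
          (Real.Gamma (m : ℝ) * Real.Gamma a * Real.Gamma (b - (m : ℝ)) *
            Real.Gamma (b - a)) *
        ∑ k ∈ range n,
          Real.Gamma ((m : ℝ) + (k : ℝ)) * Real.Gamma (a + (k : ℝ)) *
              Real.Gamma (b - (k : ℝ) - (m : ℝ) - a) /
            (((k.factorial : ℝ)) ^ 2 * Real.Gamma ((n : ℝ) - (k : ℝ))) := by
  have hm' : (0:ℝ) < m := by exact_mod_cast hm
  have hn' : (0:ℝ) < n := by exact_mod_cast hn
  have hm1 : (1:ℝ) ≤ m := by exact_mod_cast hm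
  have hn1 : (1:ℝ) ≤ n := by exact_mod_cast hn
  have hb : 0 < b := by linarith
  -- bound for j < n
  have hjb : ∀ j : ℕ, j < n → (0:ℝ) < b - m - a - j := by
    intro j hj
    have : (j:ℝ) + 1 ≤ n := by exact_mod_cast hj
    linarith
  -- the inner summand
  set F : ℕ → ℕ → ℝ := fun j k =>
    ((n - 1).choose j : ℝ) * ((k.choose j : ℝ) * uu (m : ℝ) a b k) with hF
  -- pointwise shift identity
  have hshift : ∀ j t : ℕ, ((j + t).choose j : ℝ) * uu (m : ℝ) a b (j + t)
      = uu (m : ℝ) a b j * uu ((m : ℝ) + j) (a + j) (b + j) t := by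
    intro j t
    simpa [uu] using shift_term (m : ℝ) a b hb j t
  -- summability of the inner series
  have hsum_cj : ∀ j : ℕ, j < n → Summable (fun k => (k.choose j : ℝ) * uu (m : ℝ) a b k) := by
    intro j hj
    have hjb' := hjb j hj
    have hsum2 : Summable (fun t => uu (m : ℝ) a b j * uu ((m : ℝ) + j) (a + j) (b + j) t) :=
      (summable_uu (by positivity) (by positivity) (by positivity)
        (by linarith)).mul_left _
    have hsum3 : Summable (fun t => ((t + j).choose j : ℝ) * uu (m : ℝ) a b (t + j)) := by
      refine hsum2.congr fun t => ?_
      rw [add_comm t j]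
      exact (hshift j t).symm
    exact (summable_nat_add_iff j).mp hsum3
  have hFsummable : ∀ j ∈ range n, Summable (F j) := by
    intro j hj
    exact (hsum_cj j (mem_range.mp hj)).mul_left _
  -- step 1 : pointwise expansion
  have step1 : ∀ k : ℕ, poch (m : ℝ) k * poch (n : ℝ) k * poch a k
      / (poch b k * ((k ! : ℝ)) ^ 2) = ∑ j ∈ range n, F j k := by
    intro k
    have e : ∑ j ∈ range n, F j k
        = (∑ j ∈ range n, ((n - 1).choose j : ℝ) * (k.choose j : ℝ)) * uu (m : ℝ) a b k := by
      rw [Finset.sum_mul]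
      exact Finset.sum_congr rfl fun j _ => by rw [hF]; ring
    rw [e, poch_nat_vandermonde n k hn, uu]
    have p1 := (poch_pos hb k).ne'
    have p2 : (k ! : ℝ) ≠ 0 := Nat.cast_ne_zero.mpr k.factorial_ne_zero
    field_simp
  -- step 2 : swap sums
  have step2 : ∑' k : ℕ, poch (m : ℝ) k * poch (n : ℝ) k * poch a k
      / (poch b k * ((k ! : ℝ)) ^ 2) = ∑ j ∈ range n, ∑' k, F j k := by
    rw [tsum_congr step1]
    exact Summable.tsum_finsetSum hFsummable
  -- step 3 : evaluate each inner sum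
  have step3 : ∀ j ∈ range n, ∑' k, F j k
      = ((n - 1).choose j : ℝ) * (uu (m : ℝ) a b j
        * (Real.Gamma (b + j) * Real.Gamma (b - m - a - j)
          / (Real.Gamma (b - m) * Real.Gamma (b - a)))) := by
    intro j hj
    have hj' := mem_range.mp hj
    have hjb' := hjb j hj'
    have hsum := hsum_cj j hj'
    rw [hF]
    rw [tsum_mul_left]
    congr 1
    have hsplit := (Summable.sum_add_tsum_nat_add j hsum).symm
    rw [hsplit]
    have hzero : ∑ i ∈ range j, (i.choose j : ℝ) * uu (m : ℝ) a b i = 0 := by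
      refine Finset.sum_eq_zero fun i hi => ?_
      rw [Nat.choose_eq_zero_of_lt (mem_range.mp hi)]
      simp
    rw [hzero, zero_add]
    have htail : ∀ t : ℕ, ((t + j).choose j : ℝ) * uu (m : ℝ) a b (t + j)
        = uu (m : ℝ) a b j * uu ((m : ℝ) + j) (a + j) (b + j) t := by
      intro t; rw [add_comm t j]; exact hshift j t
    rw [tsum_congr htail, tsum_mul_left]
    congr 1
    -- apply the Gauss summation
    have hgauss := gauss_hasSum (a + j) (b + j) (by positivity) (m + j)
      (by positivity) (by push_cast; linarith)
    have hcast : ((m + j : ℕ) : ℝ) = (m : ℝ) + j := by push_cast; ring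
    rw [hcast] at hgauss
    rw [hgauss.tsum_eq]
    rw [show b + (j:ℝ) - ((m:ℝ) + j) - (a + j) = b - m - a - j by ring,
      show b + (j:ℝ) - ((m:ℝ) + j) = b - m by ring,
      show b + (j:ℝ) - (a + j) = b - a by ring]
  -- assemble
  rw [step2, Finset.sum_congr rfl step3, Finset.mul_sum]
  refine Finset.sum_congr rfl fun j hj => ?_
  have hj' := mem_range.mp hj
  have hjb' := hjb j hj'
  have hjn : (0:ℝ) < (n : ℝ) - j := by
    have : (j:ℝ) + 1 ≤ n := by exact_mod_cast hj'
    linarith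
  rw [choose_gamma n j hj', uu, poch_gamma hm' j, poch_gamma ha j, poch_gamma hb j]
  rw [show b - (j:ℝ) - m - a = b - m - a - j by ring]
  have n1 : Real.Gamma (m : ℝ) ≠ 0 := (Real.Gamma_pos_of_pos hm').ne'
  have n2 : Real.Gamma a ≠ 0 := (Real.Gamma_pos_of_pos ha).ne'
  have n3 : Real.Gamma b ≠ 0 := (Real.Gamma_pos_of_pos hb).ne'
  have n4 : Real.Gamma (b + j) ≠ 0 := (Real.Gamma_pos_of_pos (by positivity)).ne'
  have n5 : Real.Gamma ((n:ℝ) - j) ≠ 0 := (Real.Gamma_pos_of_pos hjn).ne'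
  have n6 : Real.Gamma (b - m) ≠ 0 := by
    refine (Real.Gamma_pos_of_pos ?_).ne'
    have : (0:ℝ) ≤ j := Nat.cast_nonneg j
    linarith
  have n7 : Real.Gamma (b - a) ≠ 0 := by
    refine (Real.Gamma_pos_of_pos ?_).ne'
    have : (0:ℝ) ≤ j := Nat.cast_nonneg j
    linarith
  have p3 : (j ! : ℝ) ≠ 0 := Nat.cast_ne_zero.mpr j.factorial_ne_zero
  field_simp
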